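/- Assume γl < γu < 0 and βl < 0 < βu. Then the convex hull of T equals R², i.e., conv(T) = R². -/

import Mathlib

def memT (βl βu γl γu x u y z t : ℝ) : Prop :=
  u = x * t ∧ y + u ≤ 0 ∧ z + x ≤ 1 ∧ y ≤ βu * z ∧ βl * z ≤ y ∧
    0 ≤ z ∧ 0 ≤ x ∧ x ≤ 1 ∧ γl ≤ t ∧ t ≤ γu

def setT (βl βu γl γu : ℝ) : Set (ℝ × ℝ × ℝ × ℝ × ℝ) :=
  {p | memT βl βu γl γu p.1 p.2.1 p.2.2.1 p.2.2.2.1 p.2.2.2.2}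

def memR0 (βl βu γl γu x u y z t : ℝ) : Prop :=
  y + u ≤ 0 ∧ z + x ≤ 1 ∧ y ≤ βu * z ∧ βl * z ≤ y ∧
    0 ≤ u - γl * x ∧ 0 ≤ γu * x - u ∧
    u - γl * x ≤ t - γl ∧ γu * x - u ≤ γu - t

noncomputable def memR1 (βl βu γl γu x u y z t : ℝ) : Prop :=
  memR0 βl βu γl γu x u y z t ∧
    (u - βl * x) * (u - γl * x) ≤ -βl * x * (t - γl) ∧
    (0 < y →
      (γu - γl) * y + βu * (γu * x - u) + γl * y * (u - γl * x) / (y + u - γl * x) ≤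
        βu * (γu - t))

noncomputable def setR1 (βl βu γl γu : ℝ) : Set (ℝ × ℝ × ℝ × ℝ × ℝ) :=
  {p | memR1 βl βu γl γu p.1 p.2.1 p.2.2.1 p.2.2.2.1 p.2.2.2.2}

noncomputable def memR2 (βl βu γl γu x u y z t : ℝ) : Prop :=
  memR0 βl βu γl γu x u y z t ∧
    (γu - γl) * y + γl * (γu * x - u) + βu * (u - γl * x) ≤ βu * (t - γl) ∧
    (0 < y →
      (γu - γl) * y + βu * (γu * x - u) + γl * y * (u - γl * x) / (y + u - γl * x) ≤
        βu * (γu - t))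

noncomputable def setR2 (βl βu γl γu : ℝ) : Set (ℝ × ℝ × ℝ × ℝ × ℝ) :=
  {p | memR2 βl βu γl γu p.1 p.2.1 p.2.2.1 p.2.2.2.1 p.2.2.2.2}

def memR3 (βl βu γl γu x u y z t : ℝ) : Prop :=
  memR0 βl βu γl γu x u y z t ∧
    (u - βl * x) * (u - γl * x) ≤ -βl * x * (t - γl) ∧
    (γl - βl) * (γu * x - u) ≤ -βl * (γu - t)

def setR3 (βl βu γl γu : ℝ) : Set (ℝ × ℝ × ℝ × ℝ × ℝ) :=
  {p | memR3 βl βu γl γu p.1 p.2.1 p.2.2.1 p.2.2.2.1 p.2.2.2.2}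

theorem hull4 {E : Type*} [AddCommGroup E] [Module ℝ E] {s : Set E} (p q0 q1 q2 q3 : E)
    (w0 w1 w2 w3 : ℝ) (h0 : 0 ≤ w0) (h1 : 0 ≤ w1) (h2 : 0 ≤ w2) (h3 : 0 ≤ w3)
    (hs : w0 + w1 + w2 + w3 = 1)
    (m0 : q0 ∈ s) (m1 : q1 ∈ s) (m2 : q2 ∈ s) (m3 : q3 ∈ s)
    (hp : p = w0 • q0 + w1 • q1 + w2 • q2 + w3 • q3) : p ∈ convexHull ℝ s := by
  rw [hp]
  have H := (convex_convexHull ℝ s).sum_mem (t := Finset.univ)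
    (w := fun i : Fin 4 => ![w0,w1,w2,w3] i) (z := fun i : Fin 4 => ![q0,q1,q2,q3] i)
    (fun i _ => by fin_cases i <;> simpa)
    (by simp [Fin.sum_univ_four]; linarith)
    (fun i _ => by fin_cases i <;> simp <;> exact subset_convexHull ℝ s (by assumption))
  simpa [Fin.sum_univ_four] using H



theorem memT_mk {βl βu γl γu a b c d e : ℝ} (h : memT βl βu γl γu a b c d e) :
    ((a,b,c,d,e) : ℝ×ℝ×ℝ×ℝ×ℝ) ∈ setT βl βu γl γu := h

theorem dummy_memT {βl βu γl γu : ℝ} (hγ : γl ≤ γu) (hβl : βl ≤ 0) (hβu : 0 ≤ βu) :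
    ((0,0,0,0,γl) : ℝ×ℝ×ℝ×ℝ×ℝ) ∈ setT βl βu γl γu :=
  memT_mk ⟨by ring, by norm_num, by norm_num, by norm_num, by norm_num, le_rfl, le_rfl,
    zero_le_one, le_rfl, hγ⟩

set_option maxHeartbeats 2000000 in
theorem R2_subset_hull {βl βu γl γu : ℝ}
    (hγ : γl < γu) (hγu : γu < 0) (hβl : βl < 0) (hβu : 0 < βu) :
    setR2 βl βu γl γu ⊆ convexHull ℝ (setT βl βu γl γu) := by
  rintro ⟨x,u,y,z,t⟩ hp
  obtain ⟨⟨h1, h2, h3, h4, h5, h6, h7, h8⟩, hlin, hfrac⟩ :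
      memR2 βl βu γl γu x u y z t := hp
  have hΔ : (0:ℝ) < γu - γl := by linarith
  have hγl0 : γl < 0 := hγ.trans hγu
  have hx0 : 0 ≤ x := by nlinarith
  have hx1 : x ≤ 1 := by nlinarith
  have hz0 : 0 ≤ z := by nlinarith
  have htl : γl ≤ t := by linarith
  have htu : t ≤ γu := by linarith
  have hu0 : u ≤ 0 := by nlinarith
  have hyβ : y ≤ βu * (1 - x) := by nlinarith
  rcases eq_or_lt_of_le htl with htl' | htl'
  · -- t = γl, p ∈ T
    have hu : u = x * t := by rw [← htl']; linarith
    exact subset_convexHull ℝ _ (memT_mk ⟨hu, h1, h2, h3, h4, hz0, hx0, hx1, htl, htu⟩)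
  rcases eq_or_lt_of_le htu with htu' | htu'
  · -- t = γu, p ∈ T
    have hu : u = x * t := by rw [htu']; nlinarith
    exact subset_convexHull ℝ _ (memT_mk ⟨hu, h1, h2, h3, h4, hz0, hx0, hx1, htl, htu⟩)
  rcases eq_or_lt_of_le hx1 with hx1' | hx1'
  · -- x = 1, p ∈ T
    subst hx1'
    have hu : u = 1 * t := by linarith
    exact subset_convexHull ℝ _ (memT_mk ⟨hu, h1, h2, h3, h4, hz0, hx0, le_rfl, htl, htu⟩)
  -- now γl < t < γu, x < 1
  have hq1 : (0:ℝ) < γu - t := by linarith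
  have hq2 : (0:ℝ) < t - γl := by linarith
  have hx1c : (0:ℝ) < 1 - x := by linarith
  set μ1 : ℝ := (γu - t)/(γu - γl) with hμ1
  set μ2 : ℝ := (t - γl)/(γu - γl) with hμ2
  have hμ1p : 0 < μ1 := div_pos hq1 hΔ
  have hμ2p : 0 < μ2 := div_pos hq2 hΔ
  have hμsum : μ1 + μ2 = 1 := by rw [hμ1, hμ2]; field_simp; ring
  set x1 : ℝ := (γu*x - u)/(γu - t) with hx1def
  set x2 : ℝ := (u - γl*x)/(t - γl) with hx2def
  have hx1l : 0 ≤ x1 := div_nonneg h6 hq1.le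
  have hx1u : x1 ≤ 1 := (div_le_one hq1).2 h8
  have hx2l : 0 ≤ x2 := div_nonneg h5 hq2.le
  have hx2u : x2 ≤ 1 := (div_le_one hq2).2 h7
  have hne1 : γu - t ≠ 0 := hq1.ne'
  have hne2 : t - γl ≠ 0 := hq2.ne'
  have hneΔ : γu - γl ≠ 0 := hΔ.ne'
  have hnex : (1:ℝ) - x ≠ 0 := hx1c.ne'
  rcases le_or_gt y 0 with hy0 | hy0
  · -- CASE C0b : y ≤ 0
    set f1 : ℝ := (1-x1)/(1-x) with hf1def
    set f2 : ℝ := (1-x2)/(1-x) with hf2def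
    have hf1 : 0 ≤ f1 := div_nonneg (by linarith) hx1c.le
    have hf2 : 0 ≤ f2 := div_nonneg (by linarith) hx1c.le
    refine hull4 _ ((0,0,0,0,γl)) ((x1, γl*x1, y*f1, z*f1, γl) : ℝ×ℝ×ℝ×ℝ×ℝ)
      ((x2, γu*x2, y*f2, z*f2, γu) : ℝ×ℝ×ℝ×ℝ×ℝ) ((0,0,0,0,γl))
      0 μ1 μ2 0 le_rfl hμ1p.le hμ2p.le le_rfl (by linarith)
      (dummy_memT hγ.le hβl.le hβu.le) (memT_mk ⟨by ring, ?_, ?_, ?_, ?_, ?_, hx1l, hx1u,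
        le_rfl, hγ.le⟩) (memT_mk ⟨by ring, ?_, ?_, ?_, ?_, ?_, hx2l, hx2u, hγ.le, le_rfl⟩)
      (dummy_memT hγ.le hβl.le hβu.le) ?_
    · have hc : y*f1 ≤ 0 := mul_nonpos_of_nonpos_of_nonneg hy0 hf1
      nlinarith [mul_nonneg hx1l (neg_nonneg.2 hγl0.le)]
    · have : z*f1 ≤ 1-x1 := by
        rw [hf1def, mul_div_assoc' z, div_le_iff₀ hx1c]
        nlinarith
      linarith
    · have := mul_le_mul_of_nonneg_right h3 hf1
      linarith [this]
    · have := mul_le_mul_of_nonneg_right h4 hf1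
      linarith [this]
    · exact mul_nonneg hz0 hf1
    · have hc : y*f2 ≤ 0 := mul_nonpos_of_nonpos_of_nonneg hy0 hf2
      nlinarith [mul_nonneg hx2l (neg_nonneg.2 hγu.le)]
    · have : z*f2 ≤ 1-x2 := by
        rw [hf2def, mul_div_assoc' z, div_le_iff₀ hx1c]
        nlinarith
      linarith
    · have := mul_le_mul_of_nonneg_right h3 hf2
      linarith [this]
    · have := mul_le_mul_of_nonneg_right h4 hf2
      linarith [this]
    · exact mul_nonneg hz0 hf2
    · simp only [Prod.smul_mk, smul_eq_mul, Prod.mk_add_mk, Prod.mk.injEq]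
      refine ⟨?_, ?_, ?_, ?_, ?_⟩
      · rw [hμ1, hμ2, hx1def, hx2def]; field_simp; ring
      · rw [hμ1, hμ2, hx1def, hx2def]; field_simp; ring
      · rw [hf1def, hf2def, hμ1, hμ2, hx1def, hx2def]; field_simp; ring
      · rw [hf1def, hf2def, hμ1, hμ2, hx1def, hx2def]; field_simp; ring
      · rw [hμ1, hμ2]; field_simp; ring
  -- y > 0
  have hyβu : y/βu ≤ z := (div_le_iff₀' hβu).2 h3
  have hd0 : 0 ≤ 1 - x - y/βu := by
    have : y/βu ≤ 1 - x := by rw [div_le_iff₀ hβu]; nlinarith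
    linarith
  set ρ : ℝ := if (1 - x - y/βu) = 0 then 0 else (z - y/βu)/(1-x-y/βu) with hρdef
  have hρ0 : 0 ≤ ρ := by
    rw [hρdef]; split_ifs with h
    · exact le_rfl
    · exact div_nonneg (by linarith) (lt_of_le_of_ne hd0 (Ne.symm h)).le
  have hρ1 : ρ ≤ 1 := by
    rw [hρdef]; split_ifs with h
    · norm_num
    · rw [div_le_one (lt_of_le_of_ne hd0 (Ne.symm h))]; linarith
  have hρd : ρ*(1 - x - y/βu) = z - y/βu := by
    rw [hρdef]; split_ifs with h
    · rw [h]
      have : z ≤ y/βu := by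
        have : (1:ℝ) - x = y/βu := by linarith
        linarith
      have : z = y/βu := le_antisymm this hyβu
      rw [this]; ring
    · exact div_mul_cancel₀ _ h
  rcases le_or_gt ((γu-γl)*y + βu*(γu*x-u) + γu*(u-γl*x)) (βu*(γu-t)) with hiii | hiii
  · -- CASE C1
    set g1 : ℝ := min ((-γl)*x1) (βu*(1-x1)) with hg1def
    set g2 : ℝ := min ((-γu)*x2) (βu*(1-x2)) with hg2def
    have hg1n : 0 ≤ g1 := le_min (mul_nonneg (by linarith) hx1l) (mul_nonneg hβu.le (by linarith))
    have hg2n : 0 ≤ g2 := le_min (mul_nonneg (by linarith) hx2l) (mul_nonneg hβu.le (by linarith))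
    have hg1a : g1 ≤ (-γl)*x1 := min_le_left _ _
    have hg1b : g1 ≤ βu*(1-x1) := min_le_right _ _
    have hg2a : g2 ≤ (-γu)*x2 := min_le_left _ _
    have hg2b : g2 ≤ βu*(1-x2) := min_le_right _ _
    have e11 : μ1*((-γl)*x1) + μ2*((-γu)*x2) = -u := by
      rw [hμ1, hμ2, hx1def, hx2def]; field_simp; ring
    have e22 : μ1*(βu*(1-x1)) + μ2*(βu*(1-x2)) = βu*(1-x) := by
      rw [hμ1, hμ2, hx1def, hx2def]; field_simp; ring
    have hv12 : y ≤ μ1*((-γl)*x1) + μ2*(βu*(1-x2)) := by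
      have e12 : μ1*((-γl)*x1) + μ2*(βu*(1-x2))
          = ((-γl)*(γu*x-u) + βu*((t-γl) - (u-γl*x)))/(γu-γl) := by
        rw [hμ1, hμ2, hx1def, hx2def]; field_simp
      rw [e12, le_div_iff₀ hΔ]; linarith only [hlin]
    have hv21 : y ≤ μ1*(βu*(1-x1)) + μ2*((-γu)*x2) := by
      have e21 : μ1*(βu*(1-x1)) + μ2*((-γu)*x2)
          = (βu*((γu-t) - (γu*x-u)) + (-γu)*(u-γl*x))/(γu-γl) := by
        rw [hμ1, hμ2, hx1def, hx2def]; field_simp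
      rw [e21, le_div_iff₀ hΔ]; linarith only [hiii]
    have hyG : y ≤ μ1*g1 + μ2*g2 := by
      rcases min_cases ((-γl)*x1) (βu*(1-x1)) with ⟨w1e, _⟩|⟨w1e, _⟩ <;>
        rcases min_cases ((-γu)*x2) (βu*(1-x2)) with ⟨w2e, _⟩|⟨w2e, _⟩ <;>
        rw [hg1def, hg2def, w1e, w2e]
      · linarith only [e11, h1]
      · linarith only [hv12]
      · linarith only [hv21]
      · linarith only [e22, hyβ]
    set G : ℝ := μ1*g1 + μ2*g2 with hGdef
    have hGpos : 0 < G := lt_of_lt_of_le hy0 hyG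
    set θ : ℝ := y/G with hθdef
    have hθ0 : 0 ≤ θ := le_of_lt (div_pos hy0 hGpos)
    have hθ1 : θ ≤ 1 := (div_le_one hGpos).2 hyG
    have eθ : θ*G = y := by rw [hθdef]; exact div_mul_cancel₀ y hGpos.ne'
    have hθg1 : θ*g1 ≤ g1 := mul_le_of_le_one_left hg1n hθ1
    have hθg2 : θ*g2 ≤ g2 := mul_le_of_le_one_left hg2n hθ1
    have hθg1n : 0 ≤ θ*g1 := mul_nonneg hθ0 hg1n
    have hθg2n : 0 ≤ θ*g2 := mul_nonneg hθ0 hg2n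
    set z1 : ℝ := (1-ρ)*(θ*g1/βu) + ρ*(1-x1) with hz1def
    set z2 : ℝ := (1-ρ)*(θ*g2/βu) + ρ*(1-x2) with hz2def
    have hA1 : θ*g1/βu ≤ 1-x1 := by
      rw [div_le_iff₀ hβu]; linarith only [hθg1, hg1b]
    have hA2 : θ*g2/βu ≤ 1-x2 := by
      rw [div_le_iff₀ hβu]; linarith only [hθg2, hg2b]
    have hA1n : 0 ≤ θ*g1/βu := div_nonneg hθg1n hβu.le
    have hA2n : 0 ≤ θ*g2/βu := div_nonneg hθg2n hβu.le
    have hz1n : 0 ≤ z1 := add_nonneg (mul_nonneg (by linarith) hA1n)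
      (mul_nonneg hρ0 (by linarith))
    have hz2n : 0 ≤ z2 := add_nonneg (mul_nonneg (by linarith) hA2n)
      (mul_nonneg hρ0 (by linarith))
    have hz1u : z1 ≤ 1 - x1 := by
      rw [hz1def]
      linarith only [mul_le_mul_of_nonneg_left hA1 (show (0:ℝ) ≤ 1-ρ from by linarith only [hρ1]), mul_le_mul_of_nonneg_left (le_refl (1-x1)) hρ0]
    have hz2u : z2 ≤ 1 - x2 := by
      rw [hz2def]
      linarith only [mul_le_mul_of_nonneg_left hA2 (show (0:ℝ) ≤ 1-ρ from by linarith only [hρ1]), mul_le_mul_of_nonneg_left (le_refl (1-x2)) hρ0]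
    have hbd1 : θ*g1 ≤ βu*(1-x1) := le_trans hθg1 hg1b
    have hbd2 : θ*g2 ≤ βu*(1-x2) := le_trans hθg2 hg2b
    have eβz1 : βu*z1 = (1-ρ)*(θ*g1) + ρ*(βu*(1-x1)) := by
      rw [hz1def]; field_simp
    have eβz2 : βu*z2 = (1-ρ)*(θ*g2) + ρ*(βu*(1-x2)) := by
      rw [hz2def]; field_simp
    refine hull4 _ ((0,0,0,0,γl)) ((x1, γl*x1, θ*g1, z1, γl) : ℝ×ℝ×ℝ×ℝ×ℝ)
      ((x2, γu*x2, θ*g2, z2, γu) : ℝ×ℝ×ℝ×ℝ×ℝ) ((0,0,0,0,γl))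
      0 μ1 μ2 0 le_rfl hμ1p.le hμ2p.le le_rfl (by linarith)
      (dummy_memT hγ.le hβl.le hβu.le)
      (memT_mk ⟨by ring, by linarith only [hθg1, hg1a], by linarith only [hz1u], ?_, ?_,
        hz1n, hx1l, hx1u, le_rfl, hγ.le⟩)
      (memT_mk ⟨by ring, by linarith only [hθg2, hg2a], by linarith only [hz2u], ?_, ?_,
        hz2n, hx2l, hx2u, hγ.le, le_rfl⟩)
      (dummy_memT hγ.le hβl.le hβu.le) ?_
    · -- θ*g1 ≤ βu*z1
      linarith only [eβz1, mul_le_mul_of_nonneg_left hbd1 hρ0]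
    · -- βl*z1 ≤ θ*g1
      linarith only [mul_nonpos_of_nonpos_of_nonneg hβl.le hz1n, hθg1n]
    · linarith only [eβz2, mul_le_mul_of_nonneg_left hbd2 hρ0]
    · linarith only [mul_nonpos_of_nonpos_of_nonneg hβl.le hz2n, hθg2n]
    · simp only [Prod.smul_mk, smul_eq_mul, Prod.mk_add_mk, Prod.mk.injEq]
      have ez : μ1*(1-x1) + μ2*(1-x2) = 1-x := by
        rw [hμ1, hμ2, hx1def, hx2def]; field_simp; ring
      refine ⟨?_, ?_, ?_, ?_, ?_⟩
      · rw [hμ1, hμ2, hx1def, hx2def]; field_simp; ring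
      · rw [hμ1, hμ2, hx1def, hx2def]; field_simp; ring
      · rw [← eθ, hGdef]; ring
      · rw [hz1def, hz2def]
        have key : ((0*(0:ℝ) + μ1*((1-ρ)*(θ*g1/βu) + ρ*(1-x1))) + μ2*((1-ρ)*(θ*g2/βu) + ρ*(1-x2))) + 0*0
            = (1-ρ)*((θ*(μ1*g1+μ2*g2))/βu) + ρ*(μ1*(1-x1)+μ2*(1-x2)) := by ring
        rw [key, ← hGdef, eθ, ez]
        have : (1-ρ)*(y/βu) + ρ*(1-x) = y/βu + ρ*(1-x-y/βu) := by ring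
        rw [this, hρd]; ring
      · rw [hμ1, hμ2]; field_simp; ring
  · -- CASE C2 : iii fails
    have hfr := hfrac hy0
    have hb0 : 0 < u - γl*x := by
      rcases eq_or_lt_of_le h5 with hb | hb
      · exfalso
        rw [← hb] at hfr hiii
        simp at hfr
        nlinarith
      · exact hb
    have hY : 0 < y + (u - γl*x) := by linarith
    have hfr' : (γu - γl) * y + βu * (γu * x - u) +
        γl * y * (u - γl * x) / (y + (u - γl * x)) ≤ βu * (γu - t) := by
      rw [show y + (u - γl*x) = y + u - γl*x from by ring]
      exact hfr
    have hE8 : βu*(γu*x-u) ≤ βu*(γu-t) := mul_le_mul_of_nonneg_left h8 hβu.le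
    have key : 0 < (γu-γl)*y + γu*(u-γl*x) := by linarith only [hiii, hE8]
    have hW : 0 < βu*(y+(u-γl*x)) - γl*y := by
      linarith only [mul_pos hβu hY, mul_nonneg (neg_nonneg.2 hγl0.le) hy0.le]
    have hfrm : ((γu-γl)*y + βu*(γu*x-u))*(y+(u-γl*x)) + γl*y*(u-γl*x)
        ≤ βu*(γu-t)*(y+(u-γl*x)) := by
      have h' := mul_le_mul_of_nonneg_right hfr' hY.le
      have em := div_mul_cancel₀ (γl*y*(u-γl*x)) hY.ne'
      linarith only [h', em]
    rcases le_or_gt (βu*(u-γl*x) - γl*(u-γl*x)*y/(y + (u-γl*x))) (βu*(t-γl)) with hLS | hLS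
    · -- CASE C2a
      have hLSm : βu*(u-γl*x)*(y+(u-γl*x)) - γl*(u-γl*x)*y ≤ βu*(t-γl)*(y+(u-γl*x)) := by
        have h' := mul_le_mul_of_nonneg_right hLS hY.le
        have em := div_mul_cancel₀ (γl*(u-γl*x)*y) hY.ne'
        linarith only [h', em]
      have hYne : (y+(u-γl*x)) ≠ 0 := hY.ne'
      have hWne : (βu*(y+(u-γl*x)) - γl*y) ≠ 0 := hW.ne'
      have hγlne : γl ≠ 0 := hγl0.ne
      have hβune : βu ≠ 0 := hβu.ne'
      have hYne' : y + (u - x*γl) ≠ 0 := by rw [mul_comm]; exact hYne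
      have hWne' : βu*(y+(u-x*γl)) - y*γl ≠ 0 := by rw [mul_comm x, mul_comm y]; exact hWne
      set lk : ℝ := (βu*(y+(u-γl*x)) - γl*y)/((-γl)*βu) with hlkdef
      set le' : ℝ := (y+u)/γl with hledef
      set l0 : ℝ := 1 - x - y/βu with hl0def
      set xk : ℝ := βu*(y+(u-γl*x))/(βu*(y+(u-γl*x)) - γl*y) with hxkdef
      set uk : ℝ := γl*βu*y/(βu*(y+(u-γl*x)) - γl*y) with hukdef
      set yk : ℝ := (-γl)*βu*y/(βu*(y+(u-γl*x)) - γl*y) with hykdef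
      set zk : ℝ := (-γl)*y/(βu*(y+(u-γl*x)) - γl*y) with hzkdef
      set tk : ℝ := γl*y/(y+(u-γl*x)) with htkdef
      have hlk0 : 0 ≤ lk := by
        rw [hlkdef]
        exact div_nonneg hW.le (mul_nonneg (by linarith only [hγl0]) hβu.le)
      have hle0 : 0 ≤ le' := by
        rw [hledef, div_nonneg_iff]
        right
        exact ⟨h1, hγl0.le⟩
      have hl00 : 0 ≤ l0 := hd0
      have hsum : l0 + lk + le' + 0 = 1 := by
        rw [hlkdef, hledef, hl0def]; field_simp; ring
      have hL : l0*γl ≤ t - lk*tk - le'*γl := by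
        rw [← sub_nonneg]
        have e : (t - lk*tk - le'*γl) - l0*γl
            = (βu*(t-γl)*(y+(u-γl*x)) - (βu*(y+(u-γl*x)) - γl*y)*(u-γl*x))
              / (βu*(y+(u-γl*x))) := by
          rw [hlkdef, hledef, hl0def, htkdef]; field_simp; ring
        rw [e]
        apply div_nonneg _ (mul_pos hβu hY).le
        linarith only [hLSm]
      have hR : t - lk*tk - le'*γl ≤ l0*γu := by
        rw [← sub_nonneg]
        have e : l0*γu - (t - lk*tk - le'*γl)
            = (βu*(γu-t)*(y+(u-γl*x)) - ((γu-γl)*y + βu*(γu*x-u))*(y+(u-γl*x))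
                - γl*y*(u-γl*x)) / (βu*(y+(u-γl*x))) := by
          rw [hlkdef, hledef, hl0def, htkdef]; field_simp; ring
        rw [e]
        apply div_nonneg _ (mul_pos hβu hY).le
        linarith only [hfrm]
      set t0 : ℝ := if l0 = 0 then γl else (t - lk*tk - le'*γl)/l0 with ht0def
      have ht0l : γl ≤ t0 := by
        rw [ht0def]; split_ifs with h
        · exact le_rfl
        · rw [le_div_iff₀ (lt_of_le_of_ne hl00 (Ne.symm h))]
          linarith only [hL]
      have ht0u : t0 ≤ γu := by
        rw [ht0def]; split_ifs with h
        · linarith only [hγ]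
        · rw [div_le_iff₀ (lt_of_le_of_ne hl00 (Ne.symm h))]
          linarith only [hR]
      have hl0t0 : l0*t0 = t - lk*tk - le'*γl := by
        rw [ht0def]; split_ifs with h
        · rw [h]
          have h0 : (0:ℝ)*γl = 0 := by ring
          rw [h] at hL hR
          linarith only [hL, hR]
        · rw [mul_comm, div_mul_cancel₀ _ h]
      -- facts about kink point
      have hyk0 : 0 ≤ yk := by
        rw [hykdef]
        exact div_nonneg (mul_nonneg (mul_nonneg (by linarith only [hγl0]) hβu.le) hy0.le) hW.le
      have hzk0 : 0 ≤ zk := by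
        rw [hzkdef]
        exact div_nonneg (mul_nonneg (by linarith only [hγl0]) hy0.le) hW.le
      have hxk0 : 0 ≤ xk := by
        rw [hxkdef]
        exact div_nonneg (mul_pos hβu hY).le hW.le
      have hxk1 : xk ≤ 1 := by
        rw [hxkdef, div_le_one hW]
        linarith only [mul_nonneg (neg_nonneg.2 hγl0.le) hy0.le]
      have htkl : γl ≤ tk := by
        rw [htkdef, le_div_iff₀ hY]
        linarith only [mul_nonpos_of_nonpos_of_nonneg hγl0.le h5]
      have htku : tk ≤ γu := by
        rw [htkdef, div_le_iff₀ hY]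
        linarith only [key]
      refine hull4 _ ((0,0,0,ρ,t0) : ℝ×ℝ×ℝ×ℝ×ℝ) ((xk, uk, yk, zk, tk) : ℝ×ℝ×ℝ×ℝ×ℝ)
        ((1, γl, 0, 0, γl) : ℝ×ℝ×ℝ×ℝ×ℝ) ((0,0,0,0,γl))
        l0 lk le' 0 hl00 hlk0 hle0 le_rfl (by linarith only [hsum])
        (memT_mk ⟨by ring, by norm_num, by linarith only [hρ1], by positivity,
          mul_nonpos_of_nonpos_of_nonneg hβl.le hρ0, hρ0, le_rfl, zero_le_one, ht0l, ht0u⟩)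
        (memT_mk ⟨?_, ?_, ?_, ?_, ?_, hzk0, hxk0, hxk1, htkl, htku⟩)
        (memT_mk ⟨by ring, by linarith only [hγl0], by norm_num, by norm_num, by norm_num,
          le_rfl, zero_le_one, le_rfl, le_rfl, hγ.le⟩)
        (dummy_memT hγ.le hβl.le hβu.le) ?_
      · -- uk = xk * tk
        rw [hukdef, hxkdef, htkdef]; field_simp
      · -- yk + uk ≤ 0
        rw [hykdef, hukdef, ← add_div]
        rw [show (-γl)*βu*y + γl*βu*y = 0 from by ring, zero_div]
      · -- zk + xk ≤ 1
        rw [hzkdef, hxkdef, ← add_div]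
        rw [show (-γl)*y + βu*(y+(u-γl*x)) = βu*(y+(u-γl*x)) - γl*y from by ring,
          div_self hWne]
      · -- yk ≤ βu * zk
        rw [hykdef, hzkdef, mul_div_assoc']
        apply le_of_eq
        ring_nf
      · -- βl * zk ≤ yk
        exact le_trans (mul_nonpos_of_nonpos_of_nonneg hβl.le hzk0) hyk0
      · -- sum equality
        simp only [Prod.smul_mk, smul_eq_mul, Prod.mk_add_mk, Prod.mk.injEq]
        refine ⟨?_, ?_, ?_, ?_, ?_⟩
        · rw [hlkdef, hledef, hl0def, hxkdef]; field_simp; ring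
        · rw [hlkdef, hledef, hl0def, hukdef]; field_simp; ring
        · rw [hlkdef, hledef, hl0def, hykdef]; field_simp; ring
        · have e1 : lk*zk = y/βu := by
            rw [hlkdef, hzkdef, div_mul_div_comm, div_eq_div_iff (mul_ne_zero (mul_ne_zero (neg_ne_zero.2 hγlne) hβune) hWne) hβune]; ring
          have goal2 : z = l0*ρ + y/βu := by
            rw [hl0def]
            linarith only [hρd]
          rw [show ((l0*ρ + lk*zk) + le'*0) + 0*0 = l0*ρ + lk*zk from by ring, e1]
          exact goal2
        · linarith only [hl0t0]
    · -- CASE C2b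
      have hYne : (y+(u-γl*x)) ≠ 0 := hY.ne'
      have hγlne : γl ≠ 0 := hγl0.ne
      have hβune : βu ≠ 0 := hβu.ne'
      have hβγl : 0 < βu - γl := by linarith only [hβu, hγl0]
      have hβγlne : βu - γl ≠ 0 := hβγl.ne'
      have hbne : (u - γl*x) ≠ 0 := hb0.ne'
      have hLSm' : βu*(t-γl)*(y+(u-γl*x)) < βu*(u-γl*x)*(y+(u-γl*x)) - γl*(u-γl*x)*y := by
        have h' := mul_lt_mul_of_pos_right hLS hY
        have em := div_mul_cancel₀ (γl*(u-γl*x)*y) hY.ne'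
        linarith only [h', em]
      have hDY : -γl*(u-γl*x)*(u-γl*x) < ((βu-γl)*(u-γl*x) - βu*(t-γl))*(y+(u-γl*x)) := by
        nlinarith only [hLSm']
      have hD'pos : 0 < (βu-γl)*(u-γl*x) - βu*(t-γl) := by
        by_contra hc
        push_neg at hc
        have h2' := mul_nonpos_of_nonpos_of_nonneg hc hY.le
        have hB2 : 0 ≤ -γl*(u-γl*x)*(u-γl*x) :=
          mul_nonneg (mul_nonneg (neg_nonneg.2 hγl0.le) hb0.le) hb0.le
        linarith only [hDY, h2', hB2]
      have hD'ne : ((βu-γl)*(u-γl*x) - βu*(t-γl)) ≠ 0 := hD'pos.ne'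
      have hbne' : u - x*γl ≠ 0 := by rw [mul_comm]; exact hbne
      have hD'ne' : (u-x*γl)*(βu-γl) - βu*(t-γl) ≠ 0 := by rw [mul_comm x, mul_comm _ (βu-γl)]; exact hD'ne
      have hsγu' : (βu-γu)*(u-γl*x) < βu*(t-γl) := by
        nlinarith only [hiii, mul_le_mul_of_nonneg_left hyβ hΔ.le]
      have hlaN : βu*((u-γl*x)*((t-γl)-(u-γl*x))) < y*((βu-γl)*(u-γl*x) - βu*(t-γl)) := by
        by_contra hc
        push_neg at hc
        have h2' := mul_le_mul_of_nonneg_right hc hY.le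
        have i := mul_lt_mul_of_pos_right hLSm' hb0
        have ii := mul_lt_mul_of_pos_right hDY hy0
        nlinarith only [h2', i, ii]
      set kl : ℝ := βu/(βu-γl) with hkldef
      set ua : ℝ := γl*βu/(βu-γl) with huadef
      set ya : ℝ := (-γl)*βu/(βu-γl) with hyadef
      set za : ℝ := (-γl)/(βu-γl) with hzadef
      set κ : ℝ := (u-γl*x)/(t-γl) with hκdef
      set uk2 : ℝ := βu*((u-γl*x)-(t-γl))/(t-γl) with huk2def
      set yk2 : ℝ := βu*((t-γl)-(u-γl*x))/(t-γl) with hyk2def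
      set zk2 : ℝ := ((t-γl)-(u-γl*x))/(t-γl) with hzk2def
      set sk : ℝ := βu*((u-γl*x)-(t-γl))/(u-γl*x) with hskdef
      set lk2 : ℝ := (t-γl)*(u-γl*x)/((βu-γl)*(u-γl*x) - βu*(t-γl)) with hlk2def
      set la : ℝ := (y - lk2*yk2)/ya with hladef
      set le2 : ℝ := (y+u)/γl with hle2def
      set l0 : ℝ := 1 - x - y/βu with hl0def
      have hya : 0 < ya := by
        rw [hyadef]
        exact div_pos (mul_pos (neg_pos.2 hγl0) hβu) hβγl
      have hyane : ya ≠ 0 := hya.ne'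
      have hlk20 : 0 ≤ lk2 := by
        rw [hlk2def]
        exact div_nonneg (mul_nonneg hq2.le hb0.le) hD'pos.le
      have hyk20 : 0 ≤ yk2 := by
        rw [hyk2def]
        exact div_nonneg (mul_nonneg hβu.le (by linarith only [h7])) hq2.le
      have elkyk : lk2*yk2 = βu*((u-γl*x)*((t-γl)-(u-γl*x)))/((βu-γl)*(u-γl*x) - βu*(t-γl)) := by
        rw [hlk2def, hyk2def]; field_simp
      have hlky : lk2*yk2 ≤ y := by
        rw [elkyk, div_le_iff₀ hD'pos]
        linarith only [hlaN]
      have hla0 : 0 ≤ la := by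
        rw [hladef]
        exact div_nonneg (by linarith only [hlky]) hya.le
      have hle20 : 0 ≤ le2 := by
        rw [hle2def, div_nonneg_iff]
        right
        exact ⟨h1, hγl0.le⟩
      have hl00 : 0 ≤ l0 := hd0
      have hsum : l0 + la + lk2 + le2 = 1 := by
        rw [hladef, hlk2def, hle2def, hl0def, hyadef, hyk2def]
        field_simp
        ring
      have hκ0 : 0 ≤ κ := by rw [hκdef]; exact div_nonneg hb0.le hq2.le
      have hκ1 : κ ≤ 1 := by rw [hκdef, div_le_one hq2]; linarith only [h7]
      have hyk2' : 0 ≤ yk2 := hyk20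
      have hzk20 : 0 ≤ zk2 := by
        rw [hzk2def]
        exact div_nonneg (by linarith only [h7]) hq2.le
      have hskl : γl ≤ sk := by
        rw [hskdef, le_div_iff₀ hb0]
        nlinarith only [hD'pos]
      have hsku : sk ≤ γu := by
        rw [hskdef, div_le_iff₀ hb0]
        nlinarith only [hsγu']
      have hkl0 : 0 ≤ kl := by rw [hkldef]; positivity
      have hkl1 : kl ≤ 1 := by
        rw [hkldef, div_le_one hβγl]; linarith only [hγl0]
      have hya0 : 0 ≤ ya := hya.le
      have hza0 : 0 ≤ za := by
        rw [hzadef]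
        exact div_nonneg (by linarith only [hγl0]) hβγl.le
      refine hull4 _ ((0,0,0,ρ,γl) : ℝ×ℝ×ℝ×ℝ×ℝ) ((kl, ua, ya, za, γl) : ℝ×ℝ×ℝ×ℝ×ℝ)
        ((κ, uk2, yk2, zk2, sk) : ℝ×ℝ×ℝ×ℝ×ℝ) ((1, γl, 0, 0, γl) : ℝ×ℝ×ℝ×ℝ×ℝ)
        l0 la lk2 le2 hl00 hla0 hlk20 hle20 (by linarith only [hsum])
        (memT_mk ⟨by ring, by norm_num, by linarith only [hρ1], by positivity,
          mul_nonpos_of_nonpos_of_nonneg hβl.le hρ0, hρ0, le_rfl, zero_le_one, le_rfl, hγ.le⟩)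
        (memT_mk ⟨?_, ?_, ?_, ?_, ?_, hza0, hkl0, hkl1, le_rfl, hγ.le⟩)
        (memT_mk ⟨?_, ?_, ?_, ?_, ?_, hzk20, hκ0, hκ1, hskl, hsku⟩)
        (memT_mk ⟨by ring, by linarith only [hγl0], by norm_num, by norm_num, by norm_num,
          le_rfl, zero_le_one, le_rfl, le_rfl, hγ.le⟩) ?_
      · -- ua = kl * γl
        rw [huadef, hkldef]; field_simp
      · -- ya + ua ≤ 0
        rw [hyadef, huadef, ← add_div]
        rw [show (-γl)*βu + γl*βu = 0 from by ring, zero_div]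
      · -- za + kl ≤ 1
        rw [hzadef, hkldef, ← add_div]
        rw [show (-γl) + βu = βu - γl from by ring, div_self hβγlne]
      · -- ya ≤ βu * za
        rw [hyadef, hzadef, mul_div_assoc']
        apply le_of_eq
        ring_nf
      · -- βl * za ≤ ya
        exact le_trans (mul_nonpos_of_nonpos_of_nonneg hβl.le hza0) hya0
      · -- uk2 = κ * sk
        rw [huk2def, hκdef, hskdef]; field_simp
      · -- yk2 + uk2 ≤ 0
        rw [hyk2def, huk2def, ← add_div]
        rw [show βu*((t-γl)-(u-γl*x)) + βu*((u-γl*x)-(t-γl)) = 0 from by ring, zero_div]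
      · -- zk2 + κ ≤ 1
        rw [hzk2def, hκdef, ← add_div]
        rw [show ((t-γl)-(u-γl*x)) + (u-γl*x) = t-γl from by ring, div_self hne2]
      · -- yk2 ≤ βu * zk2
        rw [hyk2def, hzk2def, mul_div_assoc']
      · -- βl * zk2 ≤ yk2
        exact le_trans (mul_nonpos_of_nonpos_of_nonneg hβl.le hzk20) hyk20
      · -- sum equality
        simp only [Prod.smul_mk, smul_eq_mul, Prod.mk_add_mk, Prod.mk.injEq]
        refine ⟨?_, ?_, ?_, ?_, ?_⟩
        · rw [hladef, hlk2def, hle2def, hl0def, hyadef, hyk2def, hkldef, hκdef]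
          field_simp
          ring
        · rw [hladef, hlk2def, hle2def, hl0def, hyadef, hyk2def, huadef, huk2def]
          field_simp
          ring
        · -- y component : la*ya + lk2*yk2 = y
          have e1 : la*ya = y - lk2*yk2 := by
            rw [hladef, div_mul_cancel₀ _ hyane]
          linarith only [e1]
        · -- z component
          have e1 : la*za + lk2*zk2 = (la*ya + lk2*yk2)/βu := by
            rw [hladef, hlk2def, hyadef, hyk2def, hzadef, hzk2def]
            field_simp
          have e2 : la*ya = y - lk2*yk2 := by
            rw [hladef, div_mul_cancel₀ _ hyane]
          have e3 : la*za + lk2*zk2 = y/βu := by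
            rw [e1]
            rw [show la*ya + lk2*yk2 = y from by linarith only [e2]]
          have goal2 : z = l0*ρ + y/βu := by
            rw [hl0def]
            linarith only [hρd]
          rw [show ((l0*ρ + la*za) + lk2*zk2) + le2*0 = l0*ρ + (la*za + lk2*zk2) from by ring,
            e3]
          exact goal2
        · -- t component
          rw [hladef, hlk2def, hle2def, hl0def, hyadef, hyk2def, hskdef]
          field_simp
          ring

theorem T_subset_R2 {βl βu γl γu : ℝ}
    (hγ : γl < γu) (hγu : γu < 0) (hβl : βl < 0) (hβu : 0 < βu) :
    setT βl βu γl γu ⊆ setR2 βl βu γl γu := by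
  rintro ⟨x,u,y,z,t⟩ hm
  obtain ⟨hu, h1, h2, h3, h4, hz, hx0, hx1, htl, htu⟩ :
      memT βl βu γl γu x u y z t := hm
  show memR2 βl βu γl γu x u y z t
  subst hu
  have htl' : (0:ℝ) ≤ t - γl := by linarith
  have htu' : (0:ℝ) ≤ γu - t := by linarith
  have hyx : y ≤ βu * (1 - x) := by nlinarith
  refine ⟨⟨h1, h2, h3, h4, by nlinarith, by nlinarith, by nlinarith, by nlinarith⟩, ?_, ?_⟩
  · -- linear inequality
    nlinarith [mul_nonneg htl' (sub_nonneg.2 hyx), mul_nonpos_of_nonneg_of_nonpos htu' h1,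
      mul_nonneg (mul_nonneg htu' hx0) htl']
  · intro hy
    have hb : (0:ℝ) ≤ x * t - γl * x := by nlinarith
    have hyb : (0:ℝ) < y + (x * t - γl * x) := by linarith
    have hyb' : (0:ℝ) < y + x * t - γl * x := by linarith
    have e1 : γl * y * (x * t - γl * x) / (y + x * t - γl * x)
        = y * ((γu - γl) * y + γu * (x * t - γl * x)) / (y + x * t - γl * x) - (γu - γl) * y := by
      field_simp
      ring
    rw [e1]
    have k0 : (t - γl) * (y + x * t) ≤ 0 := mul_nonpos_of_nonneg_of_nonpos htl' h1
    have k1 : y * ((γu - γl) * y + γu * (x * t - γl * x)) ≤ (y * (γu - t)) * (y + x * t - γl * x) := by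
      nlinarith [mul_nonneg hy.le (neg_nonneg.2 k0)]
    have k2 : y * ((γu - γl) * y + γu * (x * t - γl * x)) / (y + x * t - γl * x) ≤ y * (γu - t) := by
      rw [div_le_iff₀ hyb']
      exact k1
    have k3 : y * (γu - t) + βu * (γu * x - x * t) ≤ βu * (γu - t) := by
      nlinarith [mul_nonneg htu' (sub_nonneg.2 hyx)]
    linarith

theorem harmonic_concave (y1 b1 y2 b2 a b : ℝ) (hy1 : 0 ≤ y1) (hb1 : 0 ≤ b1)
    (hy2 : 0 ≤ y2) (hb2 : 0 ≤ b2) (ha : 0 ≤ a) (hb : 0 ≤ b) (hab : a + b = 1) :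
    a * (y1 * b1 / (y1 + b1)) + b * (y2 * b2 / (y2 + b2)) ≤
      (a * y1 + b * y2) * (a * b1 + b * b2) / ((a * y1 + b * y2) + (a * b1 + b * b2)) := by
  rcases eq_or_lt_of_le (by positivity : (0:ℝ) ≤ y1 + b1) with hs1 | hs1
  · have hy1' : y1 = 0 := by nlinarith
    have hb1' : b1 = 0 := by nlinarith
    subst hy1'; subst hb1'
    rcases eq_or_lt_of_le (by positivity : (0:ℝ) ≤ y2 + b2) with hs2 | hs2
    · have hy2' : y2 = 0 := by nlinarith
      have hb2' : b2 = 0 := by nlinarith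
      subst hy2'; subst hb2'; simp
    · rcases eq_or_lt_of_le hb with hb0 | hb0
      · simp [← hb0]
      · have hbne : b ≠ 0 := hb0.ne'
        have h2ne : y2 + b2 ≠ 0 := hs2.ne'
        have h3ne : b * y2 + b * b2 ≠ 0 := by
          have h4 : b * y2 + b * b2 = b * (y2 + b2) := by ring
          rw [h4]; positivity
        have e : (a * 0 + b * y2) * (a * 0 + b * b2) / ((a * 0 + b * y2) + (a * 0 + b * b2))
            = b * (y2 * b2 / (y2 + b2)) := by
          rw [eq_comm, mul_div_assoc', div_eq_div_iff h2ne (by intro h; apply h3ne; linarith)]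
          ring
        rw [e]; simp
  · rcases eq_or_lt_of_le (by positivity : (0:ℝ) ≤ y2 + b2) with hs2 | hs2
    · have hy2' : y2 = 0 := by nlinarith
      have hb2' : b2 = 0 := by nlinarith
      subst hy2'; subst hb2'
      rcases eq_or_lt_of_le ha with ha0 | ha0
      · simp [← ha0]
      · have hane : a ≠ 0 := ha0.ne'
        have h1ne : y1 + b1 ≠ 0 := hs1.ne'
        have h3ne : a * y1 + a * b1 ≠ 0 := by
          have h4 : a * y1 + a * b1 = a * (y1 + b1) := by ring
          rw [h4]; positivity
        have e : (a * y1 + b * 0) * (a * b1 + b * 0) / ((a * y1 + b * 0) + (a * b1 + b * 0))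
            = a * (y1 * b1 / (y1 + b1)) := by
          rw [eq_comm, mul_div_assoc', div_eq_div_iff h1ne (by intro h; apply h3ne; linarith)]
          ring
        rw [e]; simp
    · have hS : (0:ℝ) < (a * y1 + b * y2) + (a * b1 + b * b2) := by
        rcases lt_or_ge 0 a with ha0 | ha0
        · nlinarith [mul_pos ha0 hs1, mul_nonneg hb hs2.le]
        · have hb0 : (0:ℝ) < b := by linarith
          nlinarith [mul_pos hb0 hs2, mul_nonneg ha hs1.le]
      have e : a * (y1 * b1 / (y1 + b1)) + b * (y2 * b2 / (y2 + b2))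
          = (a * (y1 * b1) * (y2 + b2) + b * (y2 * b2) * (y1 + b1)) / ((y1 + b1) * (y2 + b2)) := by
        field_simp
        try ring
      rw [e, div_le_div_iff₀ (by positivity) hS]
      nlinarith [mul_nonneg (mul_nonneg ha hb) (sq_nonneg (y1 * b2 - y2 * b1)),
        mul_pos hs1 hs2]

theorem frac_combo_nonneg {γl γu : ℝ} (hγl : γl < 0)
    (y1 b1 E1 y2 b2 E2 a b : ℝ)
    (hy1 : 0 ≤ y1) (hy2 : 0 ≤ y2)
    (hb1 : 0 ≤ b1) (hb2 : 0 ≤ b2) (hE1 : 0 ≤ E1) (hE2 : 0 ≤ E2)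
    (h1 : 0 < y1 → (γu - γl) * y1 + γl * y1 * b1 / (y1 + b1) ≤ E1)
    (h2 : 0 < y2 → (γu - γl) * y2 + γl * y2 * b2 / (y2 + b2) ≤ E2)
    (ha : 0 ≤ a) (hb : 0 ≤ b) (hab : a + b = 1) :
    (γu - γl) * (a * y1 + b * y2) +
      γl * (a * y1 + b * y2) * (a * b1 + b * b2) / ((a * y1 + b * y2) + (a * b1 + b * b2)) ≤
      a * E1 + b * E2 := by
  have h1' : (γu - γl) * y1 + γl * (y1 * b1 / (y1 + b1)) ≤ E1 := by
    rcases eq_or_lt_of_le hy1 with h | h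
    · rw [← h]; simp; exact hE1
    · have := h1 h; rw [mul_assoc, mul_div_assoc] at this; exact this
  have h2' : (γu - γl) * y2 + γl * (y2 * b2 / (y2 + b2)) ≤ E2 := by
    rcases eq_or_lt_of_le hy2 with h | h
    · rw [← h]; simp; exact hE2
    · have := h2 h; rw [mul_assoc, mul_div_assoc] at this; exact this
  have key := harmonic_concave y1 b1 y2 b2 a b hy1 hb1 hy2 hb2 ha hb hab
  have key2 := mul_le_mul_of_nonpos_left key hγl.le
  have m1 := mul_le_mul_of_nonneg_left h1' ha
  have m2 := mul_le_mul_of_nonneg_left h2' hb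
  rw [mul_assoc γl, mul_div_assoc]
  nlinarith [key2, m1, m2]

theorem frac_combo_neg {γl γu : ℝ} (hγl : γl < 0)
    (y1 b1 E1 y2 b2 E2 a b : ℝ)
    (hy1 : y1 < 0)
    (hb1 : 0 ≤ b1) (hb2 : 0 ≤ b2) (hE1 : 0 ≤ E1) (hE2 : 0 ≤ E2)
    (h2 : 0 < y2 → (γu - γl) * y2 + γl * y2 * b2 / (y2 + b2) ≤ E2)
    (ha : 0 ≤ a) (hb : 0 ≤ b) (hab : a + b = 1)
    (hy : 0 < a * y1 + b * y2) :
    (γu - γl) * (a * y1 + b * y2) +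
      γl * (a * y1 + b * y2) * (a * b1 + b * b2) / ((a * y1 + b * y2) + (a * b1 + b * b2)) ≤
      a * E1 + b * E2 := by
  have hb' : b = 1 - a := by linarith
  subst hb'
  have hay1 : a * y1 ≤ 0 := mul_nonpos_of_nonneg_of_nonpos ha hy1.le
  have hy2 : 0 < y2 := by
    by_contra h
    push_neg at h
    nlinarith [mul_nonpos_of_nonneg_of_nonpos hb h]
  have hd : 0 < y2 - y1 := by linarith
  set ν : ℝ := a * (y2 - y1) / y2 with hν_def
  set bc : ℝ := (y2 * b1 - y1 * b2) / (y2 - y1) with hbc_def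
  set Ec : ℝ := (y2 * E1 - y1 * E2) / (y2 - y1) with hEc_def
  have hbc : 0 ≤ bc := div_nonneg (by nlinarith) hd.le
  have hEc : 0 ≤ Ec := div_nonneg (by nlinarith) hd.le
  have hν0 : 0 ≤ ν := div_nonneg (mul_nonneg ha hd.le) hy2.le
  have hν1 : ν ≤ 1 := by
    rw [hν_def, div_le_one hy2]
    nlinarith
  have H := frac_combo_nonneg (γu := γu) hγl 0 bc Ec y2 b2 E2 ν (1 - ν)
    le_rfl hy2.le hbc hb2 hEc hE2
    (fun h => absurd h (lt_irrefl 0)) h2 hν0 (by linarith) (by ring)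
  have hy2ne : y2 ≠ 0 := hy2.ne'
  have hdne : y2 - y1 ≠ 0 := hd.ne'
  have eqY : ν * 0 + (1 - ν) * y2 = a * y1 + (1 - a) * y2 := by
    rw [hν_def]
    field_simp
    ring
  have eqB : ν * bc + (1 - ν) * b2 = a * b1 + (1 - a) * b2 := by
    rw [hν_def, hbc_def]
    field_simp
    ring
  have eqE : ν * Ec + (1 - ν) * E2 = a * E1 + (1 - a) * E2 := by
    rw [hν_def, hEc_def]
    field_simp
    ring
  rw [eqY, eqB, eqE] at H
  exact H

set_option maxHeartbeats 1000000 in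
theorem R2_convex {βl βu γl γu : ℝ}
    (hγ : γl < γu) (hγu : γu < 0) (hβl : βl < 0) (hβu : 0 < βu) :
    Convex ℝ (setR2 βl βu γl γu) := by
  rintro ⟨x1,u1,y1,z1,t1⟩ hp ⟨x2,u2,y2,z2,t2⟩ hq a b ha hb hab
  obtain ⟨⟨p1, p2, p3, p4, p5, p6, p7, p8⟩, plin, pfrac⟩ :
      memR2 βl βu γl γu x1 u1 y1 z1 t1 := hp
  obtain ⟨⟨q1, q2, q3, q4, q5, q6, q7, q8⟩, qlin, qfrac⟩ :
      memR2 βl βu γl γu x2 u2 y2 z2 t2 := hq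
  have hpt : a • ((x1,u1,y1,z1,t1) : ℝ×ℝ×ℝ×ℝ×ℝ) + b • ((x2,u2,y2,z2,t2) : ℝ×ℝ×ℝ×ℝ×ℝ)
      = ((a*x1+b*x2, a*u1+b*u2, a*y1+b*y2, a*z1+b*z2, a*t1+b*t2) : ℝ×ℝ×ℝ×ℝ×ℝ) := by
    simp [Prod.smul_mk, Prod.mk_add_mk, smul_eq_mul]
  rw [hpt]
  show memR2 βl βu γl γu (a*x1+b*x2) (a*u1+b*u2) (a*y1+b*y2) (a*z1+b*z2) (a*t1+b*t2)
  have hE1 : (0:ℝ) ≤ βu * (γu - t1) - βu * (γu * x1 - u1) := by nlinarith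
  have hE2 : (0:ℝ) ≤ βu * (γu - t2) - βu * (γu * x2 - u2) := by nlinarith
  have c1 : γl*(a+b) = γl*1 := by rw [hab]
  have c2 : γu*(a+b) = γu*1 := by rw [hab]
  have c3 : βu*γl*(a+b) = βu*γl*1 := by rw [hab]
  have c4 : βu*γu*(a+b) = βu*γu*1 := by rw [hab]
  refine ⟨⟨by nlinarith [mul_le_mul_of_nonneg_left p1 ha, mul_le_mul_of_nonneg_left q1 hb],
    by nlinarith [mul_le_mul_of_nonneg_left p2 ha, mul_le_mul_of_nonneg_left q2 hb],
    by nlinarith [mul_le_mul_of_nonneg_left p3 ha, mul_le_mul_of_nonneg_left q3 hb],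
    by nlinarith [mul_le_mul_of_nonneg_left p4 ha, mul_le_mul_of_nonneg_left q4 hb],
    by nlinarith [mul_le_mul_of_nonneg_left p5 ha, mul_le_mul_of_nonneg_left q5 hb],
    by nlinarith [mul_le_mul_of_nonneg_left p6 ha, mul_le_mul_of_nonneg_left q6 hb],
    by nlinarith [mul_le_mul_of_nonneg_left p7 ha, mul_le_mul_of_nonneg_left q7 hb, c1],
    by nlinarith [mul_le_mul_of_nonneg_left p8 ha, mul_le_mul_of_nonneg_left q8 hb, c2]⟩,
    by nlinarith [mul_le_mul_of_nonneg_left plin ha, mul_le_mul_of_nonneg_left qlin hb, c3], ?_⟩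
  intro hy
  have h1' : 0 < y1 → (γu - γl) * y1 + γl * y1 * (u1 - γl*x1) / (y1 + (u1 - γl*x1)) ≤
      βu * (γu - t1) - βu * (γu * x1 - u1) := by
    intro h
    have := pfrac h
    rw [show y1 + u1 - γl*x1 = y1 + (u1 - γl*x1) from by ring] at this
    linarith
  have h2' : 0 < y2 → (γu - γl) * y2 + γl * y2 * (u2 - γl*x2) / (y2 + (u2 - γl*x2)) ≤
      βu * (γu - t2) - βu * (γu * x2 - u2) := by
    intro h
    have := qfrac h
    rw [show y2 + u2 - γl*x2 = y2 + (u2 - γl*x2) from by ring] at this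
    linarith
  have H : (γu - γl) * (a * y1 + b * y2) +
      γl * (a * y1 + b * y2) * (a * (u1 - γl*x1) + b * (u2 - γl*x2)) /
        ((a * y1 + b * y2) + (a * (u1 - γl*x1) + b * (u2 - γl*x2))) ≤
      a * (βu * (γu - t1) - βu * (γu * x1 - u1)) + b * (βu * (γu - t2) - βu * (γu * x2 - u2)) := by
    have hγl0 : γl < 0 := hγ.trans hγu
    rcases lt_or_ge y1 0 with hneg | hpos1
    · exact frac_combo_neg hγl0 y1 _ _ y2 _ _ a b hneg p5 q5 hE1 hE2 h2' ha hb hab hy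
    · rcases lt_or_ge y2 0 with hneg2 | hpos2
      · have H2 := frac_combo_neg hγl0 y2 (u2-γl*x2) (βu * (γu - t2) - βu * (γu * x2 - u2))
          y1 (u1-γl*x1) (βu * (γu - t1) - βu * (γu * x1 - u1)) b a hneg2 q5 p5 hE2 hE1 h1'
          hb ha (by linarith) (by linarith)
        rw [show b*y2+a*y1 = a*y1+b*y2 from by ring,
          show b*(u2-γl*x2)+a*(u1-γl*x1) = a*(u1-γl*x1)+b*(u2-γl*x2) from by ring] at H2
        linarith [H2]
      · exact frac_combo_nonneg hγl0 y1 _ _ y2 _ _ a b hpos1 hpos2 p5 q5 hE1 hE2 h1' h2' ha hb hab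
  rw [show a*u1+b*u2 - γl*(a*x1+b*x2) = a*(u1-γl*x1)+b*(u2-γl*x2) from by ring,
     show (a*y1+b*y2) + (a*u1+b*u2) - γl*(a*x1+b*x2)
        = (a*y1+b*y2) + (a*(u1-γl*x1)+b*(u2-γl*x2)) from by ring]
  nlinarith [H, c4]

theorem stmt9 (βl βu γl γu : ℝ)
    (hγ : γl < γu) (hγu : γu < 0) (hβl : βl < 0) (hβu : 0 < βu) :
    convexHull ℝ (setT βl βu γl γu) = setR2 βl βu γl γu := by
  apply Set.Subset.antisymm
  · exact convexHull_min (T_subset_R2 hγ hγu hβl hβu) (R2_convex hγ hγu hβl hβu)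
  · exact R2_subset_hull hγ hγu hβl hβu
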